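/- Let 0 < α < 1, let φ : ℝ^L → ℝ^L be continuous and K-Lipschitz componentwise (in the ℓ¹ sense) with K > 0, and fix x₀ ∈ ℝ^L. If N > 0 is chosen so that L·K < N^{α}, then the fractional Volterra operator T_{x₀} is a contraction on the complete metric space C([0,T], ℝ^L) with metric d(x, y) = ‖x − y‖*, i.e. there is a constant c < 1 (namely c = L·K/N^{α}) such that ‖T_{x₀} x − T_{x₀} y‖* ≤ c ‖x − y‖* for all continuous x, y. -/

import Mathlib

open scoped BigOperators

/-- The fractional Volterra operator
`(T_{x₀} x)_k(t) = (x₀)_k + (1/Γ(α)) ∫_0^t (t-s)^{α-1} φ_k(x(s)) ds`. -/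
noncomputable def volterraOp {L : ℕ} (α : ℝ) (x₀ : Fin L → ℝ)
    (φ : (Fin L → ℝ) → (Fin L → ℝ)) (x : ℝ → Fin L → ℝ) (t : ℝ) (k : Fin L) : ℝ :=
  x₀ k + (1 / Real.Gamma α) * ∫ s in (0:ℝ)..t, (t - s) ^ (α - 1) * φ (x s) k

open MeasureTheory

lemma kernel_integrable {α : ℝ} (hα : 0 < α) {t : ℝ} (ht : 0 ≤ t)
    {g : ℝ → ℝ} (hg : ContinuousOn g (Set.Icc 0 t)) :
    IntervalIntegrable (fun s => (t - s) ^ (α - 1) * g s) volume 0 t := by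
  have base : IntervalIntegrable (fun u : ℝ => u ^ (α - 1)) volume 0 t :=
    intervalIntegral.intervalIntegrable_rpow' (by linarith)
  have base2 : IntervalIntegrable (fun s : ℝ => (t - s) ^ (α - 1)) volume 0 t := by
    have h := (base.comp_sub_left t).symm
    simpa using h
  exact base2.mul_continuousOn (by rwa [Set.uIcc_of_le ht])

lemma key_integral_bound {α N : ℝ} (hα : 0 < α) (hN : 0 < N) {t : ℝ} (ht : 0 ≤ t) :
    ∫ s in (0:ℝ)..t, (t - s) ^ (α - 1) * Real.exp (N * s)
      ≤ Real.exp (N * t) * (Real.Gamma α / N ^ α) := by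
  have hInt : IntegrableOn (fun u : ℝ => u ^ (α - 1) * Real.exp (-(N * u)))
      (Set.Ioi 0) volume := by
    have h := integrableOn_rpow_mul_exp_neg_mul_rpow
      (by linarith : (-1:ℝ) < α - 1) (p := 1) one_pos hN
    simpa [Real.rpow_one, neg_mul] using h
  have hval : ∫ u in Set.Ioi (0:ℝ), u ^ (α - 1) * Real.exp (-(N * u))
      = (1 / N) ^ α * Real.Gamma α :=
    Real.integral_rpow_mul_exp_neg_mul_Ioi hα hN
  have hinner : ∫ u in (0:ℝ)..t, u ^ (α - 1) * Real.exp (-(N * u))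
      ≤ Real.Gamma α / N ^ α := by
    rw [intervalIntegral.integral_of_le ht]
    have h1 : ∫ u in Set.Ioc (0:ℝ) t, u ^ (α - 1) * Real.exp (-(N * u))
        ≤ ∫ u in Set.Ioi (0:ℝ), u ^ (α - 1) * Real.exp (-(N * u)) := by
      refine setIntegral_mono_set hInt ?_ (HasSubset.Subset.eventuallyLE Set.Ioc_subset_Ioi_self)
      refine (ae_restrict_iff' measurableSet_Ioi).2 (Filter.Eventually.of_forall fun u hu => ?_)
      have hu' : (0:ℝ) < u := hu
      positivity
    refine h1.trans ?_
    rw [hval, one_div, Real.inv_rpow hN.le, inv_mul_eq_div]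
  have hcong : ∀ s : ℝ, (t - s) ^ (α - 1) * Real.exp (N * s)
      = Real.exp (N * t) * ((fun u => u ^ (α - 1) * Real.exp (-(N * u))) (t - s)) := by
    intro s
    show (t - s) ^ (α - 1) * Real.exp (N * s)
      = Real.exp (N * t) * ((t - s) ^ (α - 1) * Real.exp (-(N * (t - s))))
    rw [mul_comm (Real.exp (N * t)), mul_assoc, ← Real.exp_add,
      show -(N * (t - s)) + N * t = N * s by ring]
  calc ∫ s in (0:ℝ)..t, (t - s) ^ (α - 1) * Real.exp (N * s)
      = ∫ s in (0:ℝ)..t, Real.exp (N * t) *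
          ((fun u => u ^ (α - 1) * Real.exp (-(N * u))) (t - s)) :=
        intervalIntegral.integral_congr fun s _ => hcong s
    _ = Real.exp (N * t) * ∫ s in (0:ℝ)..t,
          (fun u => u ^ (α - 1) * Real.exp (-(N * u))) (t - s) :=
        intervalIntegral.integral_const_mul _ _
    _ = Real.exp (N * t) * ∫ u in (t - t)..(t - 0), u ^ (α - 1) * Real.exp (-(N * u)) := by
        rw [intervalIntegral.integral_comp_sub_left (fun u => u ^ (α - 1) * Real.exp (-(N * u))) t]
    _ ≤ Real.exp (N * t) * (Real.Gamma α / N ^ α) := by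
        rw [sub_self, sub_zero]
        exact mul_le_mul_of_nonneg_left hinner (Real.exp_nonneg _)

/-- For `0 < α < 1`, `φ` continuous and `K`-Lipschitz componentwise with
`K > 0`, and `N > 0` with `L·K < N^α`, the fractional Volterra operator is a contraction
for the weighted norm `‖·‖*`: the constant `c = L·K/N^α` satisfies `c < 1` and
`‖T_{x₀} x − T_{x₀} y‖* ≤ c·‖x − y‖*` for all continuous `x, y`. -/
theorem volterra_operator_is_contraction
    (T : ℝ) (hT : 0 < T) (L : ℕ) (hL : 1 ≤ L) (α : ℝ) (hα : 0 < α) (hα1 : α < 1)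
    (K : ℝ) (hK : 0 < K)
    (φ : (Fin L → ℝ) → (Fin L → ℝ)) (hφc : Continuous φ)
    (hφ : ∀ (k : Fin L) (u v : Fin L → ℝ), |φ u k - φ v k| ≤ K * ∑ j : Fin L, |u j - v j|)
    (x₀ : Fin L → ℝ)
    (N : ℝ) (hN : 0 < N) (hNK : (L : ℝ) * K < N ^ α) :
    (L : ℝ) * K / N ^ α < 1 ∧
    ∀ x y : ℝ → Fin L → ℝ,
      ContinuousOn x (Set.Icc 0 T) → ContinuousOn y (Set.Icc 0 T) →
      (∑ k : Fin L, ⨆ t : Set.Icc (0:ℝ) T,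
          Real.exp (-N * (t : ℝ)) * |volterraOp α x₀ φ x t k - volterraOp α x₀ φ y t k|)
        ≤ ((L : ℝ) * K / N ^ α) *
          ∑ k : Fin L, ⨆ t : Set.Icc (0:ℝ) T, Real.exp (-N * (t : ℝ)) * |x t k - y t k| := by
  have hNα : (0:ℝ) < N ^ α := Real.rpow_pos_of_pos hN α
  have hΓ : 0 < Real.Gamma α := Real.Gamma_pos_of_pos hα
  refine ⟨(div_lt_one hNα).2 hNK, ?_⟩
  intro x y hx hy
  haveI hne : Nonempty (Set.Icc (0:ℝ) T) := ⟨⟨0, Set.mem_Icc.2 ⟨le_rfl, hT.le⟩⟩⟩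
  set M := ∑ k : Fin L, ⨆ t : Set.Icc (0:ℝ) T, Real.exp (-N * (t:ℝ)) * |x t k - y t k|
    with hMdef
  have hbdd : ∀ j : Fin L, BddAbove (Set.range fun t : Set.Icc (0:ℝ) T =>
      Real.exp (-N * (t:ℝ)) * |x (t:ℝ) j - y (t:ℝ) j|) := by
    intro j
    have hx' : Continuous fun t : Set.Icc (0:ℝ) T => x (t:ℝ) j :=
      (continuous_apply j).comp hx.restrict
    have hy' : Continuous fun t : Set.Icc (0:ℝ) T => y (t:ℝ) j :=
      (continuous_apply j).comp hy.restrict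
    have hc : Continuous fun t : Set.Icc (0:ℝ) T =>
        Real.exp (-N * (t:ℝ)) * |x (t:ℝ) j - y (t:ℝ) j| :=
      (Real.continuous_exp.comp (continuous_const.mul continuous_subtype_val)).mul
        (hx'.sub hy').abs
    exact (isCompact_range hc).bddAbove
  have hMj_nonneg : ∀ j : Fin L,
      0 ≤ ⨆ t : Set.Icc (0:ℝ) T, Real.exp (-N * (t:ℝ)) * |x (t:ℝ) j - y (t:ℝ) j| := by
    intro j
    refine le_trans ?_ (le_ciSup (hbdd j) ⟨0, Set.mem_Icc.2 ⟨le_rfl, hT.le⟩⟩)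
    positivity
  have hM_nonneg : 0 ≤ M := Finset.sum_nonneg fun j _ => hMj_nonneg j
  have hpt : ∀ s : ℝ, s ∈ Set.Icc (0:ℝ) T → ∀ j : Fin L,
      |x s j - y s j| ≤ Real.exp (N * s) *
        ⨆ t : Set.Icc (0:ℝ) T, Real.exp (-N * (t:ℝ)) * |x (t:ℝ) j - y (t:ℝ) j| := by
    intro s hs j
    have h := le_ciSup (hbdd j) (⟨s, hs⟩ : Set.Icc (0:ℝ) T)
    have hexp : Real.exp (N * s) * Real.exp (-N * s) = 1 := by
      rw [← Real.exp_add, show N * s + -N * s = 0 by ring, Real.exp_zero]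
    calc |x s j - y s j| = Real.exp (N * s) * (Real.exp (-N * s) * |x s j - y s j|) := by
          rw [← mul_assoc, hexp, one_mul]
      _ ≤ _ := mul_le_mul_of_nonneg_left h (Real.exp_nonneg _)
  have hkey : ∀ k : Fin L, ∀ t : Set.Icc (0:ℝ) T,
      Real.exp (-N * (t:ℝ)) * |volterraOp α x₀ φ x t k - volterraOp α x₀ φ y t k|
        ≤ K / N ^ α * M := by
    rintro k ⟨t, ht0, htT⟩
    dsimp only
    have hsub : Set.Icc (0:ℝ) t ⊆ Set.Icc (0:ℝ) T := Set.Icc_subset_Icc le_rfl htT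
    have hφx : ContinuousOn (fun s => φ (x s) k) (Set.Icc 0 t) :=
      ((continuous_apply k).comp hφc).comp_continuousOn (hx.mono hsub)
    have hφy : ContinuousOn (fun s => φ (y s) k) (Set.Icc 0 t) :=
      ((continuous_apply k).comp hφc).comp_continuousOn (hy.mono hsub)
    have hIx := kernel_integrable hα ht0 hφx
    have hIy := kernel_integrable hα ht0 hφy
    have hIdiff : IntervalIntegrable
        (fun s => (t - s) ^ (α - 1) * (φ (x s) k - φ (y s) k)) volume 0 t :=
      kernel_integrable hα ht0 ((hφx.sub hφy))
    have hIbnd : IntervalIntegrable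
        (fun s => (t - s) ^ (α - 1) * (K * (Real.exp (N * s) * M))) volume 0 t :=
      kernel_integrable hα ht0
        (Continuous.continuousOn (continuous_const.mul
          ((Real.continuous_exp.comp (continuous_const.mul continuous_id)).mul
            continuous_const)))
    have hdiff : volterraOp α x₀ φ x t k - volterraOp α x₀ φ y t k
        = (1 / Real.Gamma α) *
            ∫ s in (0:ℝ)..t, (t - s) ^ (α - 1) * (φ (x s) k - φ (y s) k) := by
      simp only [volterraOp]
      rw [add_sub_add_left_eq_sub, ← mul_sub, ← intervalIntegral.integral_sub hIx hIy]
      congr 1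
      exact intervalIntegral.integral_congr fun s _ => (mul_sub _ _ _).symm
    have habs : |∫ s in (0:ℝ)..t, (t - s) ^ (α - 1) * (φ (x s) k - φ (y s) k)|
        ≤ ∫ s in (0:ℝ)..t, (t - s) ^ (α - 1) * (K * (Real.exp (N * s) * M)) := by
      refine (intervalIntegral.abs_integral_le_integral_abs ht0).trans ?_
      refine intervalIntegral.integral_mono_on ht0 hIdiff.abs hIbnd ?_
      intro s hs
      have hts : (0:ℝ) ≤ t - s := by linarith [hs.2]
      rw [abs_mul, abs_of_nonneg (Real.rpow_nonneg hts _)]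
      refine mul_le_mul_of_nonneg_left ?_ (Real.rpow_nonneg hts _)
      refine (hφ k _ _).trans ?_
      refine mul_le_mul_of_nonneg_left ?_ hK.le
      calc ∑ j : Fin L, |x s j - y s j|
          ≤ ∑ j : Fin L, Real.exp (N * s) *
              ⨆ u : Set.Icc (0:ℝ) T, Real.exp (-N * (u:ℝ)) * |x (u:ℝ) j - y (u:ℝ) j| :=
            Finset.sum_le_sum fun j _ => hpt s ⟨hs.1, hs.2.trans htT⟩ j
        _ = Real.exp (N * s) * M := by rw [← Finset.mul_sum]
    have hIval : ∫ s in (0:ℝ)..t, (t - s) ^ (α - 1) * (K * (Real.exp (N * s) * M))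
        ≤ K * M * (Real.exp (N * t) * (Real.Gamma α / N ^ α)) := by
      have hc : ∀ s : ℝ, (t - s) ^ (α - 1) * (K * (Real.exp (N * s) * M))
          = K * M * ((t - s) ^ (α - 1) * Real.exp (N * s)) := fun s => by ring
      rw [intervalIntegral.integral_congr fun s _ => hc s,
        intervalIntegral.integral_const_mul]
      exact mul_le_mul_of_nonneg_left (key_integral_bound hα hN ht0) (by positivity)
    have hexp : Real.exp (-N * t) * Real.exp (N * t) = 1 := by
      rw [← Real.exp_add, show -N * t + N * t = 0 by ring, Real.exp_zero]
    calc Real.exp (-N * t) * |volterraOp α x₀ φ x t k - volterraOp α x₀ φ y t k|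
        = Real.exp (-N * t) * ((1 / Real.Gamma α) *
            |∫ s in (0:ℝ)..t, (t - s) ^ (α - 1) * (φ (x s) k - φ (y s) k)|) := by
          rw [hdiff, abs_mul, abs_of_nonneg (by positivity : (0:ℝ) ≤ 1 / Real.Gamma α)]
      _ ≤ Real.exp (-N * t) * ((1 / Real.Gamma α) *
            (K * M * (Real.exp (N * t) * (Real.Gamma α / N ^ α)))) := by
          have := habs.trans hIval
          gcongr
      _ = (Real.exp (-N * t) * Real.exp (N * t)) *
            ((1 / Real.Gamma α) * Real.Gamma α) * (K * M / N ^ α) := by ring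
      _ = K / N ^ α * M := by
          rw [hexp, one_div, inv_mul_cancel₀ hΓ.ne', one_mul, one_mul]
          ring
  calc ∑ k : Fin L, ⨆ t : Set.Icc (0:ℝ) T,
        Real.exp (-N * (t:ℝ)) * |volterraOp α x₀ φ x t k - volterraOp α x₀ φ y t k|
      ≤ ∑ _k : Fin L, K / N ^ α * M :=
        Finset.sum_le_sum fun k _ => ciSup_le (hkey k)
    _ = (L:ℝ) * (K / N ^ α * M) := by
        rw [Finset.sum_const, Finset.card_univ, Fintype.card_fin, nsmul_eq_mul]
    _ = (L:ℝ) * K / N ^ α * M := by ring
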